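/- Let A₁, …, Aₙ be events on a finite probability space P on an alphabet Ω. Then the following conditions are equivalent to one another: (i) the events A₁, …, Aₙ are independent on P, i.e., for every 1 ≤ i₁ < ⋯ < i_k ≤ n, P(A_{i₁} ∩ ⋯ ∩ A_{i_k}) = P(A_{i₁})⋯P(A_{i_k}); (ii) for every Martin-Löf P-random infinite sequence α over Ω, the ensembles χ_{A₁}(α), …, χ_{Aₙ}(α) are independent; (iii) there exists a Martin-Löf P-random infinite sequence α over Ω such that the ensembles χ_{A₁}(α), …, χ_{Aₙ}(α) are independent. -/

import Mathlib

open scoped BigOperators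

namespace Paper

/-- The measure `λ_P([S])` of the open set generated by a set `S` of strings over `Ω`:
the supremum over `n` of the `P`-weight of all length-`n` strings extending some string in `S`. -/
noncomputable def cylMeasure {Ω : Type*} [Fintype Ω] (P : Ω → ℝ) (S : Set (List Ω)) : ℝ :=
  ⨆ n : ℕ, ∑ τ : Fin n → Ω,
    Set.indicator {τ : Fin n → Ω | ∃ σ ∈ S, σ <+: List.ofFn τ} (fun τ => ∏ i, P (τ i)) τ

/-- The prefix of length `n` of the infinite sequence `α`. -/
def seqPrefix {Ω : Type*} (α : ℕ → Ω) (n : ℕ) : List Ω := List.ofFn fun i : Fin n => α i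

/-- `α` belongs to the open set `[S]` generated by the set of strings `S`. -/
def inOpen {Ω : Type*} (S : Set (List Ω)) (α : ℕ → Ω) : Prop :=
  ∃ σ ∈ S, seqPrefix α σ.length = σ

/-- `P` is a finite probability space on the alphabet `Ω`. -/
def IsFPS {Ω : Type*} [Fintype Ω] (P : Ω → ℝ) : Prop :=
  (∀ a, 0 ≤ P a) ∧ ∑ a, P a = 1

/-- `C ⊆ ℕ × Ω*` is recursively enumerable (under a canonical encoding of the
finite alphabet `Ω` by an initial segment of `ℕ`). -/
def REset {Ω : Type*} [Fintype Ω] (C : Set (ℕ × List Ω)) : Prop :=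
  ∃ e : Ω ≃ Fin (Fintype.card Ω),
    REPred fun p : ℕ × List (Fin (Fintype.card Ω)) => (p.1, p.2.map e.symm) ∈ C

/-- A Martin-Löf `P`-test. -/
def MLTest {Ω : Type*} [Fintype Ω] (P : Ω → ℝ) (C : Set (ℕ × List Ω)) : Prop :=
  REset C ∧ ∀ n : ℕ, 0 < n → cylMeasure P {σ | (n, σ) ∈ C} < (2 : ℝ)⁻¹ ^ n

/-- `α` is Martin-Löf `P`-random. -/
def MLRandom {Ω : Type*} [Fintype Ω] (P : Ω → ℝ) (α : ℕ → Ω) : Prop :=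
  ∀ C : Set (ℕ × List Ω), MLTest P C → ∃ n : ℕ, 0 < n ∧ ¬ inOpen {σ | (n, σ) ∈ C} α
/-- The probability `P(A)` of an event `A ⊆ Ω`. -/
noncomputable def evP {Ω : Type*} [Fintype Ω] (P : Ω → ℝ) (A : Set Ω) : ℝ :=
  ∑ x, A.indicator P x


-- ===== PART 1 =====

lemma sum_snoc_split {Γ : Type*} [Fintype Γ] {m : ℕ} (f : (Fin (m+1) → Γ) → ℝ) :
    ∑ τ : Fin (m+1) → Γ, f τ = ∑ ρ : Fin m → Γ, ∑ a : Γ, f (Fin.snoc ρ a) := by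
  rw [← Equiv.sum_comp (Fin.snocEquiv (fun _ => Γ)) f, Fintype.sum_prod_type]
  rw [Finset.sum_comm]
  rfl

lemma sum_pi_prod {Γ : Type*} [Fintype Γ] {m : ℕ} (g : Fin m → Γ → ℝ) :
    ∑ τ : Fin m → Γ, ∏ i, g i (τ i) = ∏ i, ∑ a, g i a := by
  induction m with
  | zero => simp
  | succ m ih =>
    rw [sum_snoc_split]
    have h : ∀ (ρ : Fin m → Γ) (a : Γ), ∏ i, g i ((Fin.snoc ρ a : Fin (m+1) → Γ) i) =
        (∏ i : Fin m, g i.castSucc (ρ i)) * g (Fin.last m) a := by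
      intro ρ a
      rw [Fin.prod_univ_castSucc]
      simp
    simp_rw [h]
    rw [← Finset.sum_mul_sum]
    rw [ih (fun i a => g i.castSucc a), Fin.prod_univ_castSucc]

lemma sum_weights_one {Γ : Type*} [Fintype Γ] {P : Γ → ℝ} (h1 : ∑ a, P a = 1) (m : ℕ) :
    ∑ τ : Fin m → Γ, ∏ i, P (τ i) = 1 := by
  rw [sum_pi_prod (fun _ a => P a)]
  simp [h1]

lemma sum_marg {Γ : Type*} [Fintype Γ] {P : Γ → ℝ} (h1 : ∑ a, P a = 1)
    {m L : ℕ} (h : m ≤ L) (F : (Fin m → Γ) → ℝ) :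
    ∑ τ : Fin L → Γ, F (fun i => τ (Fin.castLE h i)) * ∏ i, P (τ i)
      = ∑ ρ : Fin m → Γ, F ρ * ∏ i, P (ρ i) := by
  induction L with
  | zero =>
    have hm : m = 0 := Nat.le_zero.mp h
    subst hm
    rfl
  | succ L ih =>
    rcases Nat.lt_or_ge m (L+1) with hm | hm
    · have hmL : m ≤ L := Nat.lt_succ_iff.mp hm
      rw [sum_snoc_split]
      have key : ∀ (ρ : Fin L → Γ) (a : Γ),
          F (fun i => (Fin.snoc ρ a : Fin (L+1) → Γ) (Fin.castLE h i)) * ∏ i, P ((Fin.snoc ρ a : Fin (L+1) → Γ) i)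
          = (F (fun i => ρ (Fin.castLE hmL i)) * ∏ i, P (ρ i)) * P a := by
        intro ρ a
        have h2 : ∀ i : Fin m, (Fin.snoc ρ a : Fin (L+1) → Γ) (Fin.castLE h i) = ρ (Fin.castLE hmL i) := by
          intro i
          have h3 : (Fin.castLE h i : Fin (L+1)) = Fin.castSucc (Fin.castLE hmL i) := by
            ext; rfl
          rw [h3, Fin.snoc_castSucc]
        have h4 : ∏ i, P ((Fin.snoc ρ a : Fin (L+1) → Γ) i) = (∏ i, P (ρ i)) * P a := by
          have : (fun i => P ((Fin.snoc ρ a : Fin (L+1) → Γ) i)) = Fin.snoc (fun i => P (ρ i)) (P a) := by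
            rw [show (fun i => P ((Fin.snoc ρ a : Fin (L+1) → Γ) i)) = P ∘ (Fin.snoc ρ a : Fin (L+1) → Γ) from rfl,
              Fin.comp_snoc]
            rfl
          rw [this, Fin.prod_snoc]
        rw [h4]
        have h5 : (fun i => (Fin.snoc ρ a : Fin (L+1) → Γ) (Fin.castLE h i)) = fun i => ρ (Fin.castLE hmL i) :=
          funext h2
        rw [h5]
        ring
      rw [Finset.sum_congr rfl fun ρ _ => by
        rw [Finset.sum_congr rfl fun a _ => key ρ a, ← Finset.mul_sum, h1, mul_one]]
      exact ih hmL
    · have : m = L + 1 := le_antisymm h hm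
      subst this
      rfl

lemma push_one {Ω Γ : Type*} [Fintype Ω] [Fintype Γ] [DecidableEq Γ]
    (P : Ω → ℝ) (φ : Ω → Γ) (G : Γ → ℝ) :
    ∑ a, G (φ a) * P a = ∑ b, G b * ∑ a, if φ a = b then P a else 0 := by
  simp_rw [Finset.mul_sum, mul_ite, mul_zero]
  rw [Finset.sum_comm]
  apply Finset.sum_congr rfl
  intro a _
  rw [Finset.sum_ite_eq Finset.univ (φ a) (fun b => G b * P a)]
  simp

lemma sum_push {Ω Γ : Type*} [Fintype Ω] [Fintype Γ] [DecidableEq Γ]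
    (P : Ω → ℝ) (φ : Ω → Γ) {m : ℕ} (F : (Fin m → Γ) → ℝ) :
    ∑ τ : Fin m → Ω, F (φ ∘ τ) * ∏ i, P (τ i)
      = ∑ υ : Fin m → Γ, F υ * ∏ i, (∑ a, if φ a = υ i then P a else 0) := by
  set P' : Γ → ℝ := fun b => ∑ a, if φ a = b then P a else 0 with hP'
  induction m with
  | zero =>
    have e1 : (Finset.univ : Finset (Fin 0 → Ω)) = {fun i => i.elim0} := by
      apply Finset.eq_singleton_iff_unique_mem.mpr
      exact ⟨Finset.mem_univ _, fun τ _ => funext fun i => i.elim0⟩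
    have e2 : (Finset.univ : Finset (Fin 0 → Γ)) = {fun i => i.elim0} := by
      apply Finset.eq_singleton_iff_unique_mem.mpr
      exact ⟨Finset.mem_univ _, fun τ _ => funext fun i => i.elim0⟩
    rw [e1, e2, Finset.sum_singleton, Finset.sum_singleton]
    congr 1
    congr 1
    exact funext fun i => i.elim0
  | succ m ih =>
    rw [sum_snoc_split, sum_snoc_split]
    have lhs1 : ∀ (τ : Fin m → Ω) (a : Ω),
        F (φ ∘ (Fin.snoc τ a : Fin (m+1) → Ω)) * ∏ i, P ((Fin.snoc τ a : Fin (m+1) → Ω) i)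
        = (F (Fin.snoc (φ ∘ τ) (φ a)) * P a) * ∏ i, P (τ i) := by
      intro τ a
      rw [Fin.comp_snoc]
      have h4 : ∏ i, P ((Fin.snoc τ a : Fin (m+1) → Ω) i) = (∏ i, P (τ i)) * P a := by
        have : (fun i => P ((Fin.snoc τ a : Fin (m+1) → Ω) i)) = Fin.snoc (fun i => P (τ i)) (P a) := by
          rw [show (fun i => P ((Fin.snoc τ a : Fin (m+1) → Ω) i)) = P ∘ (Fin.snoc τ a : Fin (m+1) → Ω) from rfl,
            Fin.comp_snoc]
          rfl
        rw [this, Fin.prod_snoc]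
      rw [h4]; ring
    have rhs1 : ∀ (υ : Fin m → Γ) (b : Γ),
        F (Fin.snoc υ b) * ∏ i, P' ((Fin.snoc υ b : Fin (m+1) → Γ) i)
        = (F (Fin.snoc υ b) * P' b) * ∏ i, P' (υ i) := by
      intro υ b
      have h4 : ∏ i, P' ((Fin.snoc υ b : Fin (m+1) → Γ) i) = (∏ i, P' (υ i)) * P' b := by
        have : (fun i => P' ((Fin.snoc υ b : Fin (m+1) → Γ) i)) = Fin.snoc (fun i => P' (υ i)) (P' b) := by
          rw [show (fun i => P' ((Fin.snoc υ b : Fin (m+1) → Γ) i)) = P' ∘ (Fin.snoc υ b : Fin (m+1) → Γ) from rfl,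
            Fin.comp_snoc]
          rfl
        rw [this, Fin.prod_snoc]
      rw [h4]; ring
    rw [Finset.sum_congr rfl fun τ _ => Finset.sum_congr rfl fun a _ => lhs1 τ a,
      Finset.sum_congr rfl fun υ _ => Finset.sum_congr rfl fun b _ => rhs1 υ b]
    have inner : ∀ τ : Fin m → Ω,
        ∑ a, F (Fin.snoc (φ ∘ τ) (φ a)) * P a = ∑ b, F (Fin.snoc (φ ∘ τ) b) * P' b := by
      intro τ
      exact push_one P φ (fun b => F (Fin.snoc (φ ∘ τ) b))
    simp_rw [← Finset.sum_mul]
    rw [Finset.sum_congr rfl (fun τ _ => by rw [inner τ])]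
    exact ih (fun υ => ∑ b, F (Fin.snoc υ b) * P' b)

-- ===== PART 2 =====
open Classical in
/-- the level-`L` weight of `[S]` -/
noncomputable def levelSum {Ω : Type*} [Fintype Ω] (P : Ω → ℝ) (S : Set (List Ω)) (L : ℕ) : ℝ :=
  ∑ τ : Fin L → Ω, if ∃ σ ∈ S, σ <+: List.ofFn τ then ∏ i, P (τ i) else 0

lemma cylMeasure_eq_iSup {Ω : Type*} [Fintype Ω] (P : Ω → ℝ) (S : Set (List Ω)) :
    cylMeasure P S = ⨆ L : ℕ, levelSum P S L := by
  classical
  unfold cylMeasure levelSum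
  exact congrArg _ (funext fun L => Finset.sum_congr rfl fun τ _ => by
    by_cases hτ : τ ∈ {τ : Fin L → Ω | ∃ σ ∈ S, σ <+: List.ofFn τ}
    · rw [Set.indicator_of_mem hτ]; exact (if_pos hτ).symm
    · rw [Set.indicator_of_notMem hτ]; exact (if_neg hτ).symm)

lemma levelSum_nonneg {Ω : Type*} [Fintype Ω] {P : Ω → ℝ} (h0 : ∀ a, 0 ≤ P a)
    (S : Set (List Ω)) (L : ℕ) : 0 ≤ levelSum P S L := by
  apply Finset.sum_nonneg
  intro τ _
  split
  · exact Finset.prod_nonneg fun i _ => h0 _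
  · exact le_refl 0

lemma levelSum_le_one {Ω : Type*} [Fintype Ω] {P : Ω → ℝ} (hP : IsFPS P)
    (S : Set (List Ω)) (L : ℕ) : levelSum P S L ≤ 1 := by
  calc levelSum P S L ≤ ∑ τ : Fin L → Ω, ∏ i, P (τ i) := by
        apply Finset.sum_le_sum
        intro τ _
        split
        · exact le_refl _
        · exact Finset.prod_nonneg fun i _ => hP.1 _
    _ = 1 := sum_weights_one hP.2 L

lemma cylMeasure_le {Ω : Type*} [Fintype Ω] {P : Ω → ℝ} {S : Set (List Ω)} {c : ℝ}
    (h : ∀ L, levelSum P S L ≤ c) : cylMeasure P S ≤ c := by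
  rw [cylMeasure_eq_iSup]
  exact ciSup_le h

lemma levelSum_le_cylMeasure {Ω : Type*} [Fintype Ω] {P : Ω → ℝ} (hP : IsFPS P)
    {S : Set (List Ω)} (L : ℕ) : levelSum P S L ≤ cylMeasure P S := by
  rw [cylMeasure_eq_iSup]
  exact le_ciSup ⟨1, by rintro x ⟨L, rfl⟩; exact levelSum_le_one hP S L⟩ L

lemma cylMeasure_nonneg {Ω : Type*} [Fintype Ω] {P : Ω → ℝ} (hP : IsFPS P)
    (S : Set (List Ω)) : 0 ≤ cylMeasure P S :=
  le_trans (levelSum_nonneg hP.1 S 0) (levelSum_le_cylMeasure hP 0)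

/-- ofFn prefix characterization -/
lemma take_ofFn_eq {Ω : Type*} {L m : ℕ} (τ : Fin L → Ω) (h : m ≤ L) :
    (List.ofFn τ).take m = List.ofFn (fun i : Fin m => τ (Fin.castLE h i)) := by
  apply List.ext_getElem
  · simp [Nat.min_eq_left h]
  · intro i h1 h2
    rw [List.getElem_take, List.getElem_ofFn, List.getElem_ofFn]
    rfl

lemma prefix_ofFn_iff {Ω : Type*} {L : ℕ} (σ : List Ω) (τ : Fin L → Ω) :
    σ <+: List.ofFn τ ↔ ∃ h : σ.length ≤ L,
      σ = List.ofFn (fun i : Fin σ.length => τ (Fin.castLE h i)) := by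
  constructor
  · intro hp
    have hl : σ.length ≤ L := by
      have := hp.length_le
      simpa using this
    have heq := List.prefix_iff_eq_take.mp hp
    rw [take_ofFn_eq τ hl] at heq
    exact ⟨hl, heq⟩
  · rintro ⟨h, heq⟩
    conv_lhs => rw [heq]
    rw [← take_ofFn_eq τ h]
    exact List.take_prefix _ _

/-- a subcover bound for levelSum -/
lemma levelSum_le_sum {Ω : Type*} [Fintype Ω] {P : Ω → ℝ} (h0 : ∀ a, 0 ≤ P a)
    {S : Set (List Ω)} {ι : Type*} {I : Finset ι} {T : ι → Set (List Ω)} {L : ℕ}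
    (hcov : ∀ τ : Fin L → Ω, (∃ σ ∈ S, σ <+: List.ofFn τ) →
      ∃ j ∈ I, ∃ σ ∈ T j, σ <+: List.ofFn τ) :
    levelSum P S L ≤ ∑ j ∈ I, levelSum P (T j) L := by
  classical
  unfold levelSum
  rw [Finset.sum_comm]
  apply Finset.sum_le_sum
  intro τ _
  by_cases h : ∃ σ ∈ S, σ <+: List.ofFn τ
  · rw [if_pos h]
    obtain ⟨j, hj, hj2⟩ := hcov τ h
    calc ∏ i, P (τ i) = if ∃ σ ∈ T j, σ <+: List.ofFn τ then ∏ i, P (τ i) else 0 :=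
          (if_pos hj2).symm
      _ ≤ ∑ j ∈ I, if ∃ σ ∈ T j, σ <+: List.ofFn τ then ∏ i, P (τ i) else 0 := by
          apply Finset.single_le_sum (f := fun j => if ∃ σ ∈ T j, σ <+: List.ofFn τ then ∏ i, P (τ i) else 0) _ hj
          intro k _
          split
          · exact Finset.prod_nonneg fun i _ => h0 _
          · exact le_refl 0
  · rw [if_neg h]
    apply Finset.sum_nonneg
    intro k _
    split
    · exact Finset.prod_nonneg fun i _ => h0 _
    · exact le_refl 0

/-- for a set of strings of exact length m, deeper levels have the same weight -/
lemma levelSum_exact {Ω : Type*} [Fintype Ω] {P : Ω → ℝ} (h1 : ∑ a, P a = 1)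
    {S : Set (List Ω)} {m L : ℕ} (hlen : ∀ σ ∈ S, σ.length = m) (h : m ≤ L) :
    levelSum P S L = levelSum P S m := by
  classical
  unfold levelSum
  have key : ∀ τ : Fin L → Ω, (∃ σ ∈ S, σ <+: List.ofFn τ) ↔
      (∃ σ ∈ S, σ <+: List.ofFn (fun i : Fin m => τ (Fin.castLE h i))) := by
    intro τ
    constructor
    · rintro ⟨σ, hσ, hp⟩
      refine ⟨σ, hσ, ?_⟩
      obtain ⟨hl, heq⟩ := (prefix_ofFn_iff σ τ).mp hp
      rw [prefix_ofFn_iff]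
      refine ⟨by simp [hlen σ hσ], ?_⟩
      conv_lhs => rw [heq]
      congr 1
    · rintro ⟨σ, hσ, hp⟩
      refine ⟨σ, hσ, ?_⟩
      obtain ⟨hl, heq⟩ := (prefix_ofFn_iff σ _).mp hp
      rw [prefix_ofFn_iff]
      refine ⟨le_trans (by simp [hlen σ hσ]) h, ?_⟩
      conv_lhs => rw [heq]
      congr 1
  calc ∑ τ : Fin L → Ω, (if ∃ σ ∈ S, σ <+: List.ofFn τ then ∏ i, P (τ i) else 0)
      = ∑ τ : Fin L → Ω,
          (fun ρ : Fin m → Ω => if ∃ σ ∈ S, σ <+: List.ofFn ρ then (1:ℝ) else 0)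
            (fun i => τ (Fin.castLE h i)) * ∏ i, P (τ i) := by
        apply Finset.sum_congr rfl
        intro τ _
        show _ = (if (∃ σ ∈ S, σ <+: List.ofFn (fun i : Fin m => τ (Fin.castLE h i))) then (1:ℝ) else 0) * ∏ i, P (τ i)
        rw [← key τ]
        split <;> simp
    _ = ∑ ρ : Fin m → Ω,
          (if ∃ σ ∈ S, σ <+: List.ofFn ρ then (1:ℝ) else 0) * ∏ i, P (ρ i) :=
        sum_marg h1 h (fun ρ => if ∃ σ ∈ S, σ <+: List.ofFn ρ then (1:ℝ) else 0)
    _ = ∑ ρ : Fin m → Ω, (if ∃ σ ∈ S, σ <+: List.ofFn ρ then ∏ i, P (ρ i) else 0) := by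
        apply Finset.sum_congr rfl
        intro ρ _
        split <;> simp

-- ===== PART 3 : pushforward =====
/-- pushforward of a finite probability space along `φ` -/
noncomputable def pushP {Ω Γ : Type*} [Fintype Ω] [DecidableEq Γ] (P : Ω → ℝ) (φ : Ω → Γ) :
    Γ → ℝ := fun b => ∑ a, if φ a = b then P a else 0

lemma pushP_isFPS {Ω Γ : Type*} [Fintype Ω] [Fintype Γ] [DecidableEq Γ]
    {P : Ω → ℝ} (hP : IsFPS P) (φ : Ω → Γ) : IsFPS (pushP P φ) := by
  constructor
  · intro b
    apply Finset.sum_nonneg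
    intro a _
    split
    · exact hP.1 a
    · exact le_refl 0
  · show (∑ b : Γ, ∑ a : Ω, if φ a = b then P a else 0) = 1
    rw [Finset.sum_comm]
    calc ∑ a : Ω, ∑ b : Γ, (if φ a = b then P a else 0)
        = ∑ a : Ω, P a := by
          apply Finset.sum_congr rfl
          intro a _
          rw [Finset.sum_ite_eq Finset.univ (φ a) (fun _ => P a)]
          simp
      _ = 1 := hP.2

lemma pull_cond_iff {Ω Γ : Type*} (φ : Ω → Γ) (C : Set (List Γ)) {L : ℕ} (τ : Fin L → Ω) :
    (∃ σ ∈ {σ : List Ω | σ.map φ ∈ C}, σ <+: List.ofFn τ) ↔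
      (∃ σ' ∈ C, σ' <+: List.ofFn (φ ∘ τ)) := by
  constructor
  · rintro ⟨σ, hσ, hp⟩
    refine ⟨σ.map φ, hσ, ?_⟩
    rw [← List.map_ofFn]
    exact hp.map φ
  · rintro ⟨σ', hσ', hp⟩
    refine ⟨(List.ofFn τ).take σ'.length, ?_, List.take_prefix _ _⟩
    show ((List.ofFn τ).take σ'.length).map φ ∈ C
    rw [List.map_take, List.map_ofFn]
    rw [← List.prefix_iff_eq_take.mp hp]
    exact hσ'

lemma cylMeasure_pull {Ω Γ : Type*} [Fintype Ω] [Fintype Γ] [DecidableEq Γ]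
    (P : Ω → ℝ) (φ : Ω → Γ) (C : Set (List Γ)) :
    cylMeasure P {σ : List Ω | σ.map φ ∈ C} = cylMeasure (pushP P φ) C := by
  classical
  rw [cylMeasure_eq_iSup, cylMeasure_eq_iSup]
  apply congrArg
  funext L
  unfold levelSum
  calc ∑ τ : Fin L → Ω, (if ∃ σ ∈ {σ : List Ω | σ.map φ ∈ C}, σ <+: List.ofFn τ then ∏ i, P (τ i) else 0)
      = ∑ τ : Fin L → Ω,
          (fun υ : Fin L → Γ => if ∃ σ' ∈ C, σ' <+: List.ofFn υ then (1:ℝ) else 0) (φ ∘ τ)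
            * ∏ i, P (τ i) := by
        apply Finset.sum_congr rfl
        intro τ _
        show _ = (if ∃ σ' ∈ C, σ' <+: List.ofFn (φ ∘ τ) then (1:ℝ) else 0) * ∏ i, P (τ i)
        rw [← pull_cond_iff φ C τ]
        split <;> simp
    _ = ∑ υ : Fin L → Γ,
          (if ∃ σ' ∈ C, σ' <+: List.ofFn υ then (1:ℝ) else 0) * ∏ i, pushP P φ (υ i) :=
        sum_push P φ (fun υ => if ∃ σ' ∈ C, σ' <+: List.ofFn υ then (1:ℝ) else 0)
    _ = ∑ υ : Fin L → Γ, (if ∃ σ' ∈ C, σ' <+: List.ofFn υ then ∏ i, pushP P φ (υ i) else 0) := by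
        apply Finset.sum_congr rfl
        intro υ _
        split <;> simp

lemma seqPrefix_map {Ω Γ : Type*} (φ : Ω → Γ) (α : ℕ → Ω) (m : ℕ) :
    seqPrefix (φ ∘ α) m = (seqPrefix α m).map φ := by
  unfold seqPrefix
  rw [List.map_ofFn]
  rfl

lemma inOpen_pull {Ω Γ : Type*} (φ : Ω → Γ) (C : Set (List Γ)) (α : ℕ → Ω) :
    inOpen {σ : List Ω | σ.map φ ∈ C} α ↔ inOpen C (φ ∘ α) := by
  constructor
  · rintro ⟨σ, hσ, hp⟩
    refine ⟨σ.map φ, hσ, ?_⟩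
    rw [List.length_map, seqPrefix_map, hp]
  · rintro ⟨σ', hσ', hp⟩
    refine ⟨seqPrefix α σ'.length, ?_, ?_⟩
    · show (seqPrefix α σ'.length).map φ ∈ C
      rw [← seqPrefix_map, hp]
      exact hσ'
    · show seqPrefix α (seqPrefix α σ'.length).length = seqPrefix α σ'.length
      congr 1
      simp [seqPrefix]

/-- computability of any function between Fin types -/
lemma primrec_fin_fun {k l : ℕ} (ψ : Fin k → Fin l) : Primrec ψ := by
  have : ∀ i : Fin k, (List.Vector.ofFn ψ).get i = ψ i := fun i =>
    List.Vector.get_ofFn ψ i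
  exact Primrec.of_eq
    (Primrec.vector_get.comp (Primrec.const (List.Vector.ofFn ψ)) Primrec.id) this

lemma REset_pull {Ω Γ : Type*} [Fintype Ω] [Fintype Γ] [DecidableEq Ω] [DecidableEq Γ]
    (φ : Ω → Γ) {C : Set (ℕ × List Γ)} (hC : REset C) :
    REset {p : ℕ × List Ω | (p.1, p.2.map φ) ∈ C} := by
  obtain ⟨eΓ, hq⟩ := hC
  obtain ⟨eΩ⟩ : Nonempty (Ω ≃ Fin (Fintype.card Ω)) := ⟨Fintype.equivFin Ω⟩
  refine ⟨eΩ, ?_⟩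
  set ψ : Fin (Fintype.card Ω) → Fin (Fintype.card Γ) := eΓ ∘ φ ∘ eΩ.symm with hψ
  have hh : Computable (fun p : ℕ × List (Fin (Fintype.card Ω)) =>
      ((p.1, p.2.map ψ) : ℕ × List (Fin (Fintype.card Γ)))) := by
    apply Computable.pair Computable.fst
    exact Primrec.to_comp (Primrec.list_map Primrec.snd ((primrec_fin_fun ψ).comp Primrec.snd).to₂)
  have := Partrec.comp hq hh
  apply REPred.of_eq this
  intro p
  show (p.1, (p.2.map ψ).map eΓ.symm) ∈ C ↔ (p.1, (p.2.map eΩ.symm).map φ) ∈ C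
  rw [List.map_map, List.map_map]
  have hcomp : (⇑eΓ.symm ∘ ψ) = φ ∘ ⇑eΩ.symm := by funext i; simp [hψ]
  rw [hcomp]


/-- randomness is preserved under symbolwise pushforward -/
lemma MLRandom_push {Ω Γ : Type*} [Fintype Ω] [Fintype Γ] [DecidableEq Ω] [DecidableEq Γ]
    {P : Ω → ℝ} (φ : Ω → Γ) {α : ℕ → Ω} (h : MLRandom P α) :
    MLRandom (pushP P φ) (φ ∘ α) := by
  intro C hC
  set D : Set (ℕ × List Ω) := {p : ℕ × List Ω | (p.1, p.2.map φ) ∈ C} with hD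
  have hDtest : MLTest P D := by
    constructor
    · exact REset_pull φ hC.1
    · intro m hm
      have : {σ : List Ω | (m, σ) ∈ D} = {σ : List Ω | σ.map φ ∈ {σ' | (m, σ') ∈ C}} := rfl
      rw [this, cylMeasure_pull]
      exact hC.2 m hm
  obtain ⟨m, hm, hno⟩ := h D hDtest
  refine ⟨m, hm, ?_⟩
  intro hop
  exact hno ((inOpen_pull φ {σ' | (m, σ') ∈ C} α).mpr hop)


-- ===== PART 4 : independence combinatorics =====
lemma evP_eq_sum_ite {Ω : Type*} [Fintype Ω] (P : Ω → ℝ) (A : Set Ω) [DecidablePred (· ∈ A)] :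
    evP P A = ∑ a, if a ∈ A then P a else 0 := by
  unfold evP
  apply Finset.sum_congr rfl
  intro a _
  rw [Set.indicator_apply]

section Indep
variable {Ω : Type*} [Fintype Ω] [DecidableEq Ω] {n : ℕ}
variable (P : Ω → ℝ) (A : Fin n → Finset Ω)

/-- probability that all events in T occur and none in F occurs -/
noncomputable def NTF (T F : Finset (Fin n)) : ℝ :=
  ∑ a, if (∀ i ∈ T, a ∈ A i) ∧ (∀ i ∈ F, a ∉ A i) then P a else 0

lemma NTF_of_indep (hP : IsFPS P)
    (hI : ∀ s : Finset (Fin n), s.Nonempty →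
      evP P {a : Ω | ∀ i ∈ s, a ∈ A i} = ∏ i ∈ s, evP P ((A i : Set Ω))) :
    ∀ (F T : Finset (Fin n)), Disjoint T F →
      NTF P A T F = (∏ i ∈ T, evP P ((A i : Set Ω))) * ∏ i ∈ F, (1 - evP P ((A i : Set Ω))) := by
  classical
  intro F
  induction F using Finset.induction_on with
  | empty =>
    intro T _
    rw [Finset.prod_empty, mul_one]
    have hN : NTF P A T ∅ = evP P {a : Ω | ∀ i ∈ T, a ∈ A i} := by
      rw [evP_eq_sum_ite]
      apply Finset.sum_congr rfl
      intro a _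
      congr 1
      simp [NTF]
    rcases T.eq_empty_or_nonempty with rfl | hT
    · rw [hN, Finset.prod_empty]
      rw [evP_eq_sum_ite]
      simpa using hP.2
    · rw [hN, hI T hT]
  | @insert j F hjF ih =>
    intro T hdisj
    have hjT : j ∉ T := by
      intro hjT
      exact (Finset.disjoint_left.mp hdisj hjT) (Finset.mem_insert_self j F)
    have hdisj1 : Disjoint T F := by
      apply Finset.disjoint_left.mpr
      intro i hiT hiF
      exact Finset.disjoint_left.mp hdisj hiT (Finset.mem_insert_of_mem hiF)
    have hdisj2 : Disjoint (insert j T) F := by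
      apply Finset.disjoint_left.mpr
      intro i hi hiF
      rcases Finset.mem_insert.mp hi with rfl | hiT
      · exact hjF hiF
      · exact Finset.disjoint_left.mp hdisj1 hiT hiF
    have hsplit : NTF P A T F = NTF P A (insert j T) F + NTF P A T (insert j F) := by
      unfold NTF
      rw [← Finset.sum_add_distrib]
      apply Finset.sum_congr rfl
      intro a _
      by_cases hj : a ∈ A j <;>
        by_cases hT : (∀ i ∈ T, a ∈ A i) <;>
          by_cases hF : (∀ i ∈ F, a ∉ A i) <;>
            simp [hj, hT, hF, Finset.forall_mem_insert, hjF]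
    have h1 := ih T hdisj1
    have h2 := ih (insert j T) hdisj2
    have : NTF P A T (insert j F) = NTF P A T F - NTF P A (insert j T) F := by
      rw [hsplit]; ring
    rw [this, h1, h2, Finset.prod_insert hjT, Finset.prod_insert hjF]
    ring

lemma indep_iff_push (hP : IsFPS P) :
    (∀ s : Finset (Fin n), s.Nonempty →
        evP P {a : Ω | ∀ i ∈ s, a ∈ A i} = ∏ i ∈ s, evP P ((A i : Set Ω))) ↔
      pushP P (fun a => fun i => decide (a ∈ A i)) =
        (fun b : Fin n → Bool =>
          ∏ i, if b i then evP P ((A i : Set Ω)) else 1 - evP P ((A i : Set Ω))) := by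
  classical
  set φ : Ω → (Fin n → Bool) := fun a => fun i => decide (a ∈ A i) with hφ
  set p : Fin n → ℝ := fun i => evP P ((A i : Set Ω)) with hp
  constructor
  · intro hI
    funext b
    have key : ∀ a : Ω, φ a = b ↔
        ((∀ i ∈ Finset.univ.filter (fun i => b i = true), a ∈ A i) ∧
         (∀ i ∈ Finset.univ.filter (fun i => ¬ b i = true), a ∉ A i)) := by
      intro a
      rw [funext_iff]
      constructor
      · intro h
        constructor
        · intro i hi
          have := h i
          rw [(Finset.mem_filter.mp hi).2] at this
          simpa [hφ] using this
        · intro i hi hmem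
          have h2 := h i
          have : b i = false := Bool.not_eq_true _ ▸ by simpa using (Finset.mem_filter.mp hi).2
          rw [this] at h2
          simp [hφ, hmem] at h2
      · rintro ⟨h1, h2⟩ i
        by_cases hb : b i = true
        · rw [hb]
          simp [hφ]
          exact h1 i (Finset.mem_filter.mpr ⟨Finset.mem_univ i, hb⟩)
        · have hb' : b i = false := by simpa using hb
          rw [hb']
          simp [hφ]
          exact h2 i (Finset.mem_filter.mpr ⟨Finset.mem_univ i, by simp [hb']⟩)
    have e1 : pushP P φ b = NTF P A (Finset.univ.filter (fun i => b i = true))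
        (Finset.univ.filter (fun i => ¬ b i = true)) := by
      unfold pushP NTF
      apply Finset.sum_congr rfl
      intro a _
      congr 1
      rw [eq_iff_iff]
      exact key a
    have hdisj : Disjoint (Finset.univ.filter (fun i => b i = true))
        (Finset.univ.filter (fun i => ¬ b i = true)) := by
      apply Finset.disjoint_left.mpr
      intro i h1 h2
      exact (Finset.mem_filter.mp h2).2 (Finset.mem_filter.mp h1).2
    rw [e1, NTF_of_indep P A hP hI _ _ hdisj]
    have := Finset.prod_filter_mul_prod_filter_not Finset.univ (fun i => b i = true)
      (fun i => if b i then p i else 1 - p i)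
    rw [← this]
    congr 1
    · apply Finset.prod_congr rfl
      intro i hi
      rw [(Finset.mem_filter.mp hi).2]
      simp
      rfl
    · apply Finset.prod_congr rfl
      intro i hi
      have hbi : b i = false := by simpa using (Finset.mem_filter.mp hi).2
      rw [hbi]
      simp
      rfl
  · intro hQ s hs
    set G : (Fin n → Bool) → ℝ := fun b => if ∀ i ∈ s, b i = true then 1 else 0 with hG
    have e1 : evP P {a : Ω | ∀ i ∈ s, a ∈ A i} = ∑ a, G (φ a) * P a := by
      rw [evP_eq_sum_ite]
      apply Finset.sum_congr rfl
      intro a _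
      have : (∀ i ∈ s, φ a i = true) ↔ (a ∈ {a : Ω | ∀ i ∈ s, a ∈ A i}) := by
        simp [hφ]
      rw [hG]
      simp only [this]
      split <;> simp
    have hQ' : ∀ b : Fin n → Bool, (∑ a : Ω, if φ a = b then P a else 0)
        = ∏ i, (if b i then p i else 1 - p i) := fun b => congrFun hQ b
    rw [e1, push_one P φ G, Finset.sum_congr rfl fun b _ => by rw [hQ' b]]
    set g : Fin n → Bool → ℝ := fun i v =>
      if i ∈ s then (if v then p i else 0) else (if v then p i else 1 - p i) with hg
    have e2 : ∀ b : Fin n → Bool,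
        G b * (∏ i, if b i then p i else 1 - p i) = ∏ i, g i (b i) := by
      intro b
      by_cases hb : ∀ i ∈ s, b i = true
      · simp only [hG]
        rw [if_pos hb, one_mul]
        apply Finset.prod_congr rfl
        intro i _
        by_cases hi : i ∈ s
        · simp [hg, hi, hb i hi]
        · simp [hg, hi]
      · push_neg at hb
        obtain ⟨i₀, hi₀s, hbi₀⟩ := hb
        have hb0 : b i₀ = false := by simpa using hbi₀
        simp only [hG]
        rw [if_neg (by push_neg; exact ⟨i₀, hi₀s, hbi₀⟩), zero_mul]
        symm
        apply Finset.prod_eq_zero (Finset.mem_univ i₀)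
        simp [hg, hi₀s, hb0]
    rw [Finset.sum_congr rfl fun b _ => e2 b, sum_pi_prod g]
    have e3 : ∀ i, (∑ v : Bool, g i v) = if i ∈ s then p i else 1 := by
      intro i
      by_cases hi : i ∈ s <;> simp [hg, hi]
    rw [Finset.prod_congr rfl fun i _ => e3 i]
    rw [Finset.prod_ite_mem Finset.univ s p, Finset.univ_inter]

end Indep

-- ===== PART 5a : Chebyshev =====
section Cheb
variable {Γ : Type*} [Fintype Γ] [DecidableEq Γ]

/-- real-valued count of occurrences of `b0` -/
noncomputable def cntR (b0 : Γ) {m : ℕ} (τ : Fin m → Γ) : ℝ :=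
  ∑ i, (if τ i = b0 then (1:ℝ) else 0)

lemma var_bound {Q : Γ → ℝ} (hQ : IsFPS Q) (b0 : Γ) (m : ℕ) :
    ∑ τ : Fin m → Γ, (cntR b0 τ - m * Q b0)^2 * ∏ i, Q (τ i)
      = m * (Q b0 - Q b0 ^ 2) := by
  classical
  set p : ℝ := Q b0 with hp
  set f : Γ → ℝ := fun a => (if a = b0 then (1:ℝ) else 0) - p with hf
  have hfQ : ∑ a, f a * Q a = 0 := by
    have : ∀ a, f a * Q a = (if a = b0 then Q a else 0) - p * Q a := by
      intro a
      by_cases h : a = b0 <;> simp [hf, h] <;> ring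
    rw [Finset.sum_congr rfl fun a _ => this a, Finset.sum_sub_distrib,
      Finset.sum_ite_eq' Finset.univ b0 Q, ← Finset.mul_sum, hQ.2]
    simp [hp]
  have hf2Q : ∑ a, f a ^ 2 * Q a = p - p ^ 2 := by
    have : ∀ a, f a ^ 2 * Q a = (if a = b0 then Q a else 0) * (1 - 2*p) + p^2 * Q a := by
      intro a
      by_cases h : a = b0 <;> simp [hf, h] <;> ring
    rw [Finset.sum_congr rfl fun a _ => this a, Finset.sum_add_distrib,
      ← Finset.sum_mul, Finset.sum_ite_eq' Finset.univ b0 Q, ← Finset.mul_sum, hQ.2]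
    simp
    ring
  have hcnt : ∀ τ : Fin m → Γ, cntR b0 τ - m * p = ∑ j, f (τ j) := by
    intro τ
    rw [hf]
    unfold cntR
    rw [Finset.sum_sub_distrib]
    simp
  have hterm : ∀ j l : Fin m, (∑ τ : Fin m → Γ, f (τ j) * f (τ l) * ∏ i, Q (τ i))
      = if j = l then p - p ^ 2 else 0 := by
    intro j l
    by_cases hjl : j = l
    · subst hjl
      rw [if_pos rfl]
      set g : Fin m → Γ → ℝ := fun i a => (if i = j then f a * f a else 1) * Q a with hg
      have e1 : ∀ τ : Fin m → Γ, f (τ j) * f (τ j) * ∏ i, Q (τ i) = ∏ i, g i (τ i) := by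
        intro τ
        rw [hg]
        simp only []
        rw [Finset.prod_mul_distrib]
        congr 1
        rw [Finset.prod_ite_eq' Finset.univ j (fun i => f (τ i) * f (τ i))]
        simp
      rw [Finset.sum_congr rfl fun τ _ => e1 τ, sum_pi_prod g]
      have e2 : ∀ i, (∑ a, g i a) = if i = j then p - p^2 else 1 := by
        intro i
        by_cases hi : i = j
        · rw [if_pos hi, hg]
          simp only [if_pos hi]
          rw [← hf2Q]
          apply Finset.sum_congr rfl
          intro a _
          ring
        · rw [if_neg hi, hg]
          simp only [if_neg hi]
          simp [hQ.2]
      rw [Finset.prod_congr rfl fun i _ => e2 i,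
        Finset.prod_ite_eq' Finset.univ j (fun _ => p - p^2)]
      simp
    · rw [if_neg hjl]
      set g : Fin m → Γ → ℝ := fun i a =>
        (if i = j then f a else 1) * ((if i = l then f a else 1) * Q a) with hg
      have e1 : ∀ τ : Fin m → Γ, f (τ j) * f (τ l) * ∏ i, Q (τ i) = ∏ i, g i (τ i) := by
        intro τ
        rw [hg]
        simp only []
        rw [Finset.prod_mul_distrib, Finset.prod_mul_distrib]
        rw [Finset.prod_ite_eq' Finset.univ j (fun i => f (τ i)),
          Finset.prod_ite_eq' Finset.univ l (fun i => f (τ i))]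
        simp [mul_assoc]
      rw [Finset.sum_congr rfl fun τ _ => e1 τ, sum_pi_prod g]
      apply Finset.prod_eq_zero (Finset.mem_univ j)
      rw [hg]
      simp only [if_pos rfl, if_neg hjl]
      rw [← hfQ]
      apply Finset.sum_congr rfl
      intro a _
      simp only [if_true, hf]
      ring
  calc ∑ τ : Fin m → Γ, (cntR b0 τ - m * p)^2 * ∏ i, Q (τ i)
      = ∑ τ : Fin m → Γ, ∑ j, ∑ l, f (τ j) * f (τ l) * ∏ i, Q (τ i) := by
        apply Finset.sum_congr rfl
        intro τ _
        rw [hcnt τ, pow_two, Finset.sum_mul_sum]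
        rw [Finset.sum_mul]
        apply Finset.sum_congr rfl
        intro j _
        rw [Finset.sum_mul]
    _ = ∑ j, ∑ τ : Fin m → Γ, ∑ l, f (τ j) * f (τ l) * ∏ i, Q (τ i) := Finset.sum_comm
    _ = ∑ j, ∑ l, ∑ τ : Fin m → Γ, f (τ j) * f (τ l) * ∏ i, Q (τ i) := by
        apply Finset.sum_congr rfl
        intro j _
        exact Finset.sum_comm
    _ = ∑ j : Fin m, ∑ l : Fin m, if j = l then p - p ^ 2 else 0 := by
        apply Finset.sum_congr rfl
        intro j _
        exact Finset.sum_congr rfl fun l _ => hterm j l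
    _ = m * (p - p ^ 2) := by
        rw [Finset.sum_congr rfl fun j _ =>
          Finset.sum_ite_eq Finset.univ j (fun _ => p - p ^ 2)]
        simp [mul_comm]
        ring

lemma cheb_bound {Q : Γ → ℝ} (hQ : IsFPS Q) (b0 : Γ) (m : ℕ) {t : ℝ} (ht : 0 < t) :
    ∑ τ : Fin m → Γ, (if t ≤ |cntR b0 τ - m * Q b0| then ∏ i, Q (τ i) else 0)
      ≤ m * (Q b0 - Q b0 ^ 2) / t ^ 2 := by
  classical
  rw [← var_bound hQ b0 m]
  rw [Finset.sum_div]
  apply Finset.sum_le_sum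
  intro τ _
  have hw : 0 ≤ ∏ i, Q (τ i) := Finset.prod_nonneg fun i _ => hQ.1 _
  split
  · rename_i h
    have h2 : t ^ 2 ≤ (cntR b0 τ - m * Q b0) ^ 2 := by
      calc t ^ 2 ≤ |cntR b0 τ - m * Q b0| ^ 2 := by
            apply pow_le_pow_left₀ (le_of_lt ht) h
        _ = (cntR b0 τ - m * Q b0) ^ 2 := sq_abs _
    rw [le_div_iff₀ (by positivity : (0:ℝ) < t ^ 2)]
    calc (∏ i, Q (τ i)) * t ^ 2 ≤ (∏ i, Q (τ i)) * (cntR b0 τ - m * Q b0) ^ 2 :=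
          mul_le_mul_of_nonneg_left h2 hw
      _ = (cntR b0 τ - m * Q b0) ^ 2 * ∏ i, Q (τ i) := mul_comm _ _
  · positivity

end Cheb

-- ===== PART 5b : union tests =====
lemma geom_bound (k : ℕ) (s : Finset ℕ) (hs : ∀ j ∈ s, k ≤ j) :
    ∑ j ∈ s, (2:ℝ)⁻¹ ^ (j+2) ≤ (2:ℝ)⁻¹ ^ (k+1) := by
  rcases s.eq_empty_or_nonempty with rfl | hne
  · simp [le_of_lt (pow_pos (by norm_num : (0:ℝ) < 2⁻¹) (k+1))]
  · set B : ℕ := s.sup id + 1 with hB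
    have hsub : s ⊆ Finset.Ico k B := by
      intro j hj
      exact Finset.mem_Ico.mpr ⟨hs j hj, Nat.lt_succ_of_le (Finset.le_sup (f := id) hj)⟩
    have hkB : k ≤ B := by
      obtain ⟨j, hj⟩ := hne
      exact le_trans (hs j hj) (le_of_lt (Finset.mem_Ico.mp (hsub hj)).2)
    calc ∑ j ∈ s, (2:ℝ)⁻¹ ^ (j+2)
        ≤ ∑ j ∈ Finset.Ico k B, (2:ℝ)⁻¹ ^ (j+2) := by
          apply Finset.sum_le_sum_of_subset_of_nonneg hsub
          intro j _ _
          positivity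
      _ = (2:ℝ)⁻¹ ^ 2 * ∑ j ∈ Finset.Ico k B, (2:ℝ)⁻¹ ^ j := by
          rw [Finset.mul_sum]
          apply Finset.sum_congr rfl
          intro j _
          rw [← pow_add]
          ring_nf
      _ = (2:ℝ)⁻¹ ^ 2 * (((2:ℝ)⁻¹ ^ B - (2:ℝ)⁻¹ ^ k) / (2⁻¹ - 1)) := by
          rw [geom_sum_Ico (by norm_num) hkB]
      _ ≤ (2:ℝ)⁻¹ ^ 2 * (2 * (2:ℝ)⁻¹ ^ k) := by
          apply mul_le_mul_of_nonneg_left _ (by positivity)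
          rw [div_le_iff_of_neg (by norm_num : (2:ℝ)⁻¹ - 1 < 0)]
          have : (0:ℝ) ≤ (2:ℝ)⁻¹ ^ B := by positivity
          nlinarith
      _ = (2:ℝ)⁻¹ ^ (k+1) := by
          rw [pow_add]
          ring

lemma test_small {Γ : Type*} [Fintype Γ] {Q : Γ → ℝ} (hQ : IsFPS Q)
    {M : ℕ → ℕ} (hM : StrictMono M) (E : ℕ → Set (List Γ))
    (hlen : ∀ j, ∀ σ ∈ E j, σ.length = M j)
    (hbound : ∀ j, levelSum Q (E j) (M j) ≤ (2:ℝ)⁻¹ ^ (j+2)) (k : ℕ) :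
    cylMeasure Q {σ | ∃ j, k ≤ j ∧ σ ∈ E j} ≤ (2:ℝ)⁻¹ ^ (k+1) := by
  apply cylMeasure_le
  intro L
  classical
  set I : Finset ℕ := (Finset.range (L+1)).filter (fun j => k ≤ j ∧ M j ≤ L) with hI
  have hcov : ∀ τ : Fin L → Γ, (∃ σ ∈ {σ | ∃ j, k ≤ j ∧ σ ∈ E j}, σ <+: List.ofFn τ) →
      ∃ j ∈ I, ∃ σ ∈ E j, σ <+: List.ofFn τ := by
    rintro τ ⟨σ, ⟨j, hkj, hσ⟩, hpre⟩
    have hlenL : M j ≤ L := by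
      rw [← hlen j σ hσ]
      have := hpre.length_le
      simpa using this
    have hjL : j < L + 1 := Nat.lt_succ_of_le (le_trans hM.le_apply hlenL)
    exact ⟨j, Finset.mem_filter.mpr ⟨Finset.mem_range.mpr hjL, hkj, hlenL⟩, σ, hσ, hpre⟩
  calc levelSum Q {σ | ∃ j, k ≤ j ∧ σ ∈ E j} L
      ≤ ∑ j ∈ I, levelSum Q (E j) L := levelSum_le_sum hQ.1 hcov
    _ = ∑ j ∈ I, levelSum Q (E j) (M j) := by
        apply Finset.sum_congr rfl
        intro j hj
        exact levelSum_exact hQ.2 (hlen j) (Finset.mem_filter.mp hj).2.2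
    _ ≤ ∑ j ∈ I, (2:ℝ)⁻¹ ^ (j+2) := Finset.sum_le_sum fun j _ => hbound j
    _ ≤ (2:ℝ)⁻¹ ^ (k+1) := geom_bound k I fun j hj => (Finset.mem_filter.mp hj).2.1

lemma exact_level_cond {Γ : Type*} {S : Set (List Γ)} {m : ℕ}
    (hlen : ∀ σ ∈ S, σ.length = m) (τ : Fin m → Γ) :
    (∃ σ ∈ S, σ <+: List.ofFn τ) ↔ List.ofFn τ ∈ S := by
  constructor
  · rintro ⟨σ, hσ, hpre⟩
    have : σ = List.ofFn τ := hpre.eq_of_length (by simp [hlen σ hσ])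
    rwa [← this]
  · intro h
    exact ⟨List.ofFn τ, h, List.prefix_refl _⟩

lemma count_ofFn_eq_cntR {Γ : Type*} [DecidableEq Γ] (b0 : Γ) :
    ∀ {m : ℕ} (τ : Fin m → Γ), ((List.ofFn τ).count b0 : ℝ) = cntR b0 τ := by
  intro m
  induction m with
  | zero => intro τ; simp [cntR]
  | succ m ih =>
    intro τ
    rw [List.ofFn_succ, List.count_cons]
    unfold cntR
    rw [Fin.sum_univ_succ]
    push_cast
    rw [ih (fun i => τ i.succ)]
    unfold cntR
    by_cases h : τ 0 = b0 <;> simp [h] <;> ring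

-- ===== PART 5c : frequency tests =====
section Freq
variable {Γ : Type*} [Fintype Γ] [DecidableEq Γ]

def Mfn (c : ℕ) (j : ℕ) : ℕ := 2^(j+2) * c

lemma Mfn_strictMono {c : ℕ} (hc : 0 < c) : StrictMono (Mfn c) := by
  intro a b h
  unfold Mfn
  exact (Nat.mul_lt_mul_right hc).mpr (Nat.pow_lt_pow_right (by norm_num) (by omega))

lemma Mfn_pos {c : ℕ} (hc : 0 < c) (j : ℕ) : 0 < Mfn c j :=
  Nat.mul_pos (Nat.pow_pos (by norm_num)) hc

/-- the frequency test: strings whose length is `Mfn c j` for some `j ≥` the level,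
whose `b0`-frequency is above (resp. below) `rn/rd`. -/
def freqTest (b0 : Γ) (rn rd c : ℕ) (up : Bool) : Set (ℕ × List Γ) :=
  {p | (∃ j, p.1 ≤ j ∧ p.2.length = Mfn c j) ∧
    (if up then rn * p.2.length ≤ rd * (p.2.count b0)
      else rd * (p.2.count b0) ≤ rn * p.2.length)}

lemma primrec_pow2 : Primrec (fun n : ℕ => 2 ^ n) := by
  have h : Primrec (fun n : ℕ => (Nat.rec 1 (fun _ ih => 2 * ih) n : ℕ)) :=
    Primrec.nat_rec₁ 1 (Primrec.nat_double.comp Primrec.snd).to₂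
  apply Primrec.of_eq h
  intro n
  induction n with
  | zero => rfl
  | succ n ih => simpa [pow_succ, ih] using by ring_nf

lemma primrec_Mfn (c : ℕ) : Primrec (Mfn c) := by
  unfold Mfn
  exact Primrec.nat_mul.comp
    (primrec_pow2.comp (Primrec.succ.comp (Primrec.succ.comp Primrec.id)))
    (Primrec.const c)

def countFold {α : Type*} [DecidableEq α] (c : α) (l : List α) : ℕ :=
  l.foldr (fun x acc => if x = c then acc + 1 else acc) 0

lemma countFold_eq {α : Type*} [DecidableEq α] (c : α) (l : List α) :
    countFold c l = l.count c := by
  induction l with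
  | nil => rfl
  | cons a l ih =>
    rw [List.count_cons]
    unfold countFold at *
    simp only [List.foldr_cons, ih]
    by_cases h : a = c <;> simp [h, beq_iff_eq]

lemma primrec_countFold {α : Type*} [Primcodable α] [DecidableEq α] (c : α) :
    Primrec (countFold c) := by
  unfold countFold
  exact Primrec.list_foldr Primrec.id (Primrec.const 0)
    (Primrec.ite
      (Primrec.eq.comp (Primrec.fst.comp Primrec.snd) (Primrec.const c))
      (Primrec.succ.comp (Primrec.snd.comp Primrec.snd))
      (Primrec.snd.comp Primrec.snd)).to₂

def existsFold {α : Type*} (M : ℕ → ℕ) (p : ℕ × List α) : Bool :=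
  (List.range (p.2.length + 1)).foldr
    (fun j acc => (decide (p.1 ≤ j) && decide (p.2.length = M j)) || acc) false

lemma foldr_or_eq_true {g : ℕ → Bool} : ∀ (l : List ℕ),
    (l.foldr (fun j acc => g j || acc) false = true) ↔ ∃ j ∈ l, g j = true := by
  intro l
  induction l with
  | nil => simp
  | cons a l ih => simp [ih]

lemma existsFold_eq {α : Type*} {M : ℕ → ℕ} (hM : StrictMono M) (p : ℕ × List α) :
    existsFold M p = true ↔ ∃ j, p.1 ≤ j ∧ p.2.length = M j := by
  unfold existsFold
  rw [foldr_or_eq_true]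
  constructor
  · rintro ⟨j, _, hj2⟩
    simp only [Bool.and_eq_true, decide_eq_true_eq] at hj2
    exact ⟨j, hj2⟩
  · rintro ⟨j, hj1, hj2⟩
    refine ⟨j, ?_, by simp [hj1, hj2]⟩
    rw [List.mem_range]
    have : j ≤ M j := hM.le_apply
    omega

lemma primrec_existsFold {α : Type*} [Primcodable α] {M : ℕ → ℕ} (hM : Primrec M) :
    Primrec (existsFold (α := α) M) := by
  have hh : Primrec₂ (fun (p : ℕ × List α) (q : ℕ × Bool) =>
      ((decide (p.1 ≤ q.1) && decide (p.2.length = M q.1)) || q.2 : Bool)) := by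
    exact Primrec.to₂ <| Primrec.or.comp
      (Primrec.and.comp
        (Primrec.nat_le.comp (Primrec.fst.comp Primrec.fst) (Primrec.fst.comp Primrec.snd)).decide
        (Primrec.eq.comp (Primrec.list_length.comp (Primrec.snd.comp Primrec.fst))
          (hM.comp (Primrec.fst.comp Primrec.snd))).decide)
      (Primrec.snd.comp Primrec.snd)
  have H := Primrec.list_foldr
    (Primrec.list_range.comp (Primrec.succ.comp (Primrec.list_length.comp
      (Primrec.snd (β := List α)))))
    (Primrec.const false) hh
  exact H.of_eq (fun p => rfl)

lemma freqTest_REset (b0 : Γ) (rn rd c : ℕ) (hc : 0 < c) (up : Bool) :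
    REset (freqTest b0 rn rd c up) := by
  classical
  set e : Γ ≃ Fin (Fintype.card Γ) := Fintype.equivFin Γ with he
  refine ⟨e, ?_⟩
  apply ComputablePred.to_re
  rw [ComputablePred.computable_iff]
  have hcount : ∀ l : List (Fin (Fintype.card Γ)),
      (l.map e.symm).count b0 = l.count (e b0) := by
    intro l
    conv_lhs => rw [show b0 = e.symm (e b0) by simp]
    exact List.count_map_of_injective l e.symm e.symm.injective (e b0)
  cases up with
  | true =>
    refine ⟨fun p => existsFold (Mfn c) p &&
      decide (rn * p.2.length ≤ rd * countFold (e b0) p.2), ?_, ?_⟩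
    · apply Primrec.to_comp
      exact Primrec.and.comp (primrec_existsFold (primrec_Mfn c))
        (Primrec.nat_le.comp
          (Primrec.nat_mul.comp (Primrec.const rn) (Primrec.list_length.comp Primrec.snd))
          (Primrec.nat_mul.comp (Primrec.const rd) ((primrec_countFold (e b0)).comp Primrec.snd))).decide
    · funext p
      rw [eq_iff_iff]
      simp only [freqTest, Set.mem_setOf_eq, Bool.and_eq_true,
        existsFold_eq (Mfn_strictMono hc), decide_eq_true_eq, List.length_map,
        hcount, countFold_eq, if_true]
  | false =>
    refine ⟨fun p => existsFold (Mfn c) p &&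
      decide (rd * countFold (e b0) p.2 ≤ rn * p.2.length), ?_, ?_⟩
    · apply Primrec.to_comp
      exact Primrec.and.comp (primrec_existsFold (primrec_Mfn c))
        (Primrec.nat_le.comp
          (Primrec.nat_mul.comp (Primrec.const rd) ((primrec_countFold (e b0)).comp Primrec.snd))
          (Primrec.nat_mul.comp (Primrec.const rn) (Primrec.list_length.comp Primrec.snd))).decide
    · funext p
      rw [eq_iff_iff]
      simp only [freqTest, Set.mem_setOf_eq, Bool.and_eq_true,
        existsFold_eq (Mfn_strictMono hc), decide_eq_true_eq, List.length_map,
        hcount, countFold_eq, Bool.false_eq_true, if_false]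

lemma freqTest_small {Q : Γ → ℝ} (hQ : IsFPS Q) (b0 : Γ) {rn rd dn dd : ℕ}
    (hrd : 0 < rd) (hdn : 0 < dn) (hdd : 0 < dd) (up : Bool)
    (hside : if up then Q b0 + (dn:ℝ)/dd ≤ (rn:ℝ)/rd else (rn:ℝ)/rd + (dn:ℝ)/dd ≤ Q b0)
    (k : ℕ) (hk : 0 < k) :
    cylMeasure Q {σ | (k, σ) ∈ freqTest b0 rn rd (dd*dd) up} < (2:ℝ)⁻¹ ^ k := by
  classical
  set c : ℕ := dd*dd with hcdef
  have hc : 0 < c := Nat.mul_pos hdd hdd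
  set p : ℝ := Q b0 with hpdef
  set δ : ℝ := (dn:ℝ)/dd with hδdef
  set r : ℝ := (rn:ℝ)/rd with hrdef
  have hδpos : 0 < δ := by
    apply div_pos <;> exact_mod_cast (by assumption)
  set E : ℕ → Set (List Γ) := fun j => {σ | σ.length = Mfn c j ∧
    (if up then rn * σ.length ≤ rd * (σ.count b0)
      else rd * (σ.count b0) ≤ rn * σ.length)} with hE
  have hset : {σ | (k, σ) ∈ freqTest b0 rn rd c up} = {σ | ∃ j, k ≤ j ∧ σ ∈ E j} := by
    ext σ
    simp only [freqTest, Set.mem_setOf_eq, hE]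
    tauto
  have hlen : ∀ j, ∀ σ ∈ E j, σ.length = Mfn c j := fun j σ hσ => hσ.1
  have hbound : ∀ j, levelSum Q (E j) (Mfn c j) ≤ (2:ℝ)⁻¹ ^ (j+2) := by
    intro j
    set m : ℕ := Mfn c j with hm
    have hmpos : 0 < m := Mfn_pos hc j
    have hmR : (0:ℝ) < m := by exact_mod_cast hmpos
    have key : ∀ τ : Fin m → Γ, List.ofFn τ ∈ E j → δ * m ≤ |cntR b0 τ - m * p| := by
      intro τ hτ
      obtain ⟨_, hcond⟩ := hτ
      have hlenτ : (List.ofFn τ).length = m := by simp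
      rw [hlenτ] at hcond
      have hcnt : ((List.ofFn τ).count b0 : ℝ) = cntR b0 τ := count_ofFn_eq_cntR b0 τ
      cases up with
      | true =>
        rw [if_pos rfl] at hcond
        have hsd : p + δ ≤ r := by simpa using hside
        have h1 : (rn:ℝ) * m ≤ rd * cntR b0 τ := by
          rw [← hcnt]
          exact_mod_cast hcond
        have h2 : r * m ≤ cntR b0 τ := by
          rw [hrdef, div_mul_eq_mul_div, div_le_iff₀ (by exact_mod_cast hrd : (0:ℝ) < rd)]
          linarith [h1]
        have h3 : δ * m ≤ cntR b0 τ - m * p := by nlinarith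
        exact le_trans h3 (le_abs_self _)
      | false =>
        rw [if_neg (by simp)] at hcond
        have hsd : r + δ ≤ p := by simpa using hside
        have h1 : (rd:ℝ) * cntR b0 τ ≤ rn * m := by
          rw [← hcnt]
          exact_mod_cast hcond
        have h2 : cntR b0 τ ≤ r * m := by
          rw [hrdef, div_mul_eq_mul_div, le_div_iff₀ (by exact_mod_cast hrd : (0:ℝ) < rd)]
          linarith [h1]
        have h3 : δ * m ≤ m * p - cntR b0 τ := by nlinarith
        rw [abs_sub_comm]
        exact le_trans h3 (le_abs_self _)
    have step1 : levelSum Q (E j) m ≤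
        ∑ τ : Fin m → Γ, (if δ * m ≤ |cntR b0 τ - m * p| then ∏ i, Q (τ i) else 0) := by
      unfold levelSum
      apply Finset.sum_le_sum
      intro τ _
      by_cases h : ∃ σ ∈ E j, σ <+: List.ofFn τ
      · rw [if_pos h, if_pos (key τ ((exact_level_cond (hlen j) τ).mp h))]
      · rw [if_neg h]
        split
        · exact Finset.prod_nonneg fun i _ => hQ.1 _
        · exact le_refl 0
    have step2 := cheb_bound hQ b0 m (t := δ * m) (by positivity)
    have step3 : (m:ℝ) * (p - p ^ 2) / (δ * m) ^ 2 ≤ (2:ℝ)⁻¹ ^ (j+2) := by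
      have hMR : (m:ℝ) = 2^(j+2) * (dd*dd : ℕ) := by
        rw [hm]
        unfold Mfn
        push_cast
        ring_nf
        norm_num
        rw [hcdef]; push_cast; ring
      have e1 : (m:ℝ) * (p - p ^ 2) / (δ * m) ^ 2 = (p - p^2) / (δ^2 * m) := by
        field_simp
      have hp2 : p - p ^ 2 ≤ 1/4 := by nlinarith [sq_nonneg (p - 1/2)]
      have e2 : (2:ℝ)^(j+2) ≤ δ^2 * m := by
        have hδ2 : δ^2 * m = (dn:ℝ)^2 * 2^(j+2) := by
          rw [hMR, hδdef]
          have : ((dd:ℝ)) ≠ 0 := by positivity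
          field_simp
          push_cast; ring
        have hdn1 : (1:ℝ) ≤ (dn:ℝ)^2 := by
          have : (1:ℝ) ≤ (dn:ℝ) := by exact_mod_cast hdn
          nlinarith
        rw [hδ2]
        nlinarith [pow_pos (by norm_num : (0:ℝ) < 2) (j+2)]
      calc (m:ℝ) * (p - p ^ 2) / (δ * m) ^ 2 = (p - p^2) / (δ^2 * m) := e1
        _ ≤ (1/4) / (2:ℝ)^(j+2) :=
            div_le_div₀ (by norm_num) hp2 (by positivity) e2
        _ ≤ (2:ℝ)⁻¹ ^ (j+2) := by
            rw [inv_pow]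
            rw [div_le_iff₀ (by positivity : (0:ℝ) < (2:ℝ)^(j+2))]
            rw [inv_mul_cancel₀ (by positivity : ((2:ℝ)^(j+2)) ≠ 0)]
            norm_num
    exact le_trans step1 (le_trans step2 step3)
  rw [hset]
  calc cylMeasure Q {σ | ∃ j, k ≤ j ∧ σ ∈ E j} ≤ (2:ℝ)⁻¹ ^ (k+1) :=
        test_small hQ (Mfn_strictMono hc) E hlen hbound k
    _ < (2:ℝ)⁻¹ ^ k := by
        apply pow_lt_pow_right_of_lt_one₀ (by norm_num) (by norm_num)
        omega

lemma freq_random_consequence {Q : Γ → ℝ} (hQ : IsFPS Q) (b0 : Γ) {rn rd dn dd : ℕ}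
    (hrd : 0 < rd) (hdn : 0 < dn) (hdd : 0 < dd) (up : Bool)
    (hside : if up then Q b0 + (dn:ℝ)/dd ≤ (rn:ℝ)/rd else (rn:ℝ)/rd + (dn:ℝ)/dd ≤ Q b0)
    {β : ℕ → Γ} (hβ : MLRandom Q β) :
    ∃ k, ∀ j, k ≤ j →
      ¬(if up then rn * (Mfn (dd*dd) j) ≤ rd * ((seqPrefix β (Mfn (dd*dd) j)).count b0)
        else rd * ((seqPrefix β (Mfn (dd*dd) j)).count b0) ≤ rn * (Mfn (dd*dd) j)) := by
  have hc : 0 < dd*dd := Nat.mul_pos hdd hdd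
  obtain ⟨k, hk, hno⟩ := hβ (freqTest b0 rn rd (dd*dd) up)
    ⟨freqTest_REset b0 rn rd (dd*dd) hc up,
     fun m hm => freqTest_small hQ b0 hrd hdn hdd up hside m hm⟩
  refine ⟨k, fun j hj hcond => ?_⟩
  apply hno
  refine ⟨seqPrefix β (Mfn (dd*dd) j), ?_, ?_⟩
  · show (k, seqPrefix β (Mfn (dd*dd) j)) ∈ freqTest b0 rn rd (dd*dd) up
    have hlen : (seqPrefix β (Mfn (dd*dd) j)).length = Mfn (dd*dd) j := by
      simp [seqPrefix]
    refine ⟨⟨j, hj, hlen⟩, ?_⟩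
    rw [hlen]
    exact hcond
  · show seqPrefix β (seqPrefix β (Mfn (dd*dd) j)).length = _
    congr 1
    simp [seqPrefix]

/-- a sequence cannot be Martin-Löf random with respect to two distinct FPS -/
lemma random_unique {Q1 Q2 : Γ → ℝ} (h1 : IsFPS Q1) (h2 : IsFPS Q2)
    {β : ℕ → Γ} (hb1 : MLRandom Q1 β) (hb2 : MLRandom Q2 β) : Q1 = Q2 := by
  have main : ∀ (R1 R2 : Γ → ℝ), IsFPS R1 → IsFPS R2 → MLRandom R1 β → MLRandom R2 β →
      ∀ b0 : Γ, ¬ (R1 b0 < R2 b0) := by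
    intro R1 R2 g1 g2 gb1 gb2 b0 hlt
    obtain ⟨q1, hq1a, hq1b⟩ := exists_rat_btwn hlt
    obtain ⟨q2, hq2a, hq2b⟩ := exists_rat_btwn hq1b
    have hq12 : q1 < q2 := by exact_mod_cast hq2a
    set r : ℚ := (q1+q2)/2 with hr
    set δ : ℚ := (q2-q1)/2 with hδ
    have hδpos : 0 < δ := by rw [hδ]; linarith
    have hrpos : 0 < r := by
      have h0 : (0:ℝ) ≤ R1 b0 := g1.1 b0
      have : (0:ℝ) < q1 := lt_of_le_of_lt h0 hq1a
      have : (0:ℚ) < q1 := by exact_mod_cast this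
      rw [hr]; linarith
    set rn : ℕ := r.num.toNat with hrn
    set rd : ℕ := r.den with hrd'
    set dn : ℕ := δ.num.toNat with hdn'
    set dd : ℕ := δ.den with hdd'
    have hrdpos : 0 < rd := r.pos
    have hddpos : 0 < dd := δ.pos
    have hdnpos : 0 < dn := by
      rw [hdn']
      have := (Rat.num_pos (a := δ)).mpr hδpos
      omega
    have hrcast : (rn:ℝ)/rd = (r:ℝ) := by
      rw [hrn, hrd']
      have hnum : ((r.num.toNat : ℤ) : ℝ) = (r.num : ℝ) := by
        congr 1
        exact Int.toNat_of_nonneg (le_of_lt ((Rat.num_pos (a := r)).mpr hrpos))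
      push_cast
      rw [show ((r.num.toNat : ℕ) : ℝ) = (r.num : ℝ) by exact_mod_cast hnum]
      rw [Rat.cast_def]
    have hdcast : (dn:ℝ)/dd = (δ:ℝ) := by
      rw [hdn', hdd']
      have hnum : ((δ.num.toNat : ℤ) : ℝ) = (δ.num : ℝ) := by
        congr 1
        exact Int.toNat_of_nonneg (le_of_lt ((Rat.num_pos (a := δ)).mpr hδpos))
      push_cast
      rw [show ((δ.num.toNat : ℕ) : ℝ) = (δ.num : ℝ) by exact_mod_cast hnum]
      rw [Rat.cast_def]
    have hup : R1 b0 + (dn:ℝ)/dd ≤ (rn:ℝ)/rd := by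
      rw [hrcast, hdcast]
      have : ((r - δ : ℚ) : ℝ) = ((q1 : ℚ) : ℝ) := by
        congr 1
        rw [hr, hδ]; ring
      push_cast at this
      linarith [hq1a, this]
    have hdown : (rn:ℝ)/rd + (dn:ℝ)/dd ≤ R2 b0 := by
      rw [hrcast, hdcast]
      have : ((r + δ : ℚ) : ℝ) = ((q2 : ℚ) : ℝ) := by
        congr 1
        rw [hr, hδ]; ring
      push_cast at this
      linarith [hq2b, this]
    obtain ⟨k1, hk1⟩ := freq_random_consequence g1 b0 hrdpos hdnpos hddpos true
      (by rw [if_pos rfl]; exact hup) gb1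
    obtain ⟨k2, hk2⟩ := freq_random_consequence g2 b0 hrdpos hdnpos hddpos false
      (by rw [if_neg (by simp)]; exact hdown) gb2
    set j : ℕ := max k1 k2 with hj
    have A := hk1 j (le_max_left _ _)
    have B := hk2 j (le_max_right _ _)
    rw [if_pos rfl] at A
    rw [if_neg (by simp)] at B
    omega
  funext b0
  rcases lt_trichotomy (Q1 b0) (Q2 b0) with h | h | h
  · exact absurd h (main Q1 Q2 h1 h2 hb1 hb2 b0)
  · exact h
  · exact absurd h (main Q2 Q1 h2 h1 hb2 hb1 b0)

end Freq

-- ===== PART 6 : existence of random sequences =====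
lemma repred_code {α : Type*} [Primcodable α] {q : α → Prop} (h : REPred q) :
    ∃ ch : Nat.Partrec.Code, ∀ a, q a ↔ (ch.eval (Encodable.encode a)).Dom := by
  obtain ⟨ch, hch⟩ := Nat.Partrec.Code.exists_code.mp h
  refine ⟨ch, fun a => ?_⟩
  rw [hch]
  simp [Encodable.encodek, Part.assert]

lemma cylMeasure_empty {Ω : Type*} [Fintype Ω] (P : Ω → ℝ) :
    cylMeasure P (∅ : Set (List Ω)) = 0 := by
  rw [cylMeasure_eq_iSup]
  have h : ∀ L, levelSum P (∅ : Set (List Ω)) L = 0 := by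
    intro L
    unfold levelSum
    apply Finset.sum_eq_zero
    intro τ _
    rw [if_neg]
    rintro ⟨σ, hσ, -⟩
    exact hσ
  simp only [h]
  exact ciSup_const

lemma seqPrefix_take {Ω : Type*} (α : ℕ → Ω) {m L : ℕ} (h : m ≤ L) :
    (seqPrefix α L).take m = seqPrefix α m := by
  unfold seqPrefix
  rw [take_ofFn_eq (fun i : Fin L => α i) h]
  rfl

open Classical in
lemma exists_MLRandom {Ω : Type*} [Fintype Ω] [Nonempty Ω] [DecidableEq Ω]
    (P : Ω → ℝ) (hP : IsFPS P) : ∃ α : ℕ → Ω, MLRandom P α := by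
  by_contra hno
  push_neg at hno
  have hno' : ∀ α : ℕ → Ω, ∃ C, MLTest P C ∧
      ∀ n, 0 < n → inOpen {σ | (n, σ) ∈ C} α := by
    intro α
    have := hno α
    unfold MLRandom at this
    push_neg at this
    exact this
  haveI := Fintype.toEncodable (Ω ≃ Fin (Fintype.card Ω))
  set ι := Nat.Partrec.Code × (Ω ≃ Fin (Fintype.card Ω)) with hι
  set testOf : ι → Set (ℕ × List Ω) := fun x =>
    {p | ((x.1.eval (Encodable.encode ((p.1, p.2.map x.2)))).Dom)} with htestOf
  have decode_test : ∀ C : Set (ℕ × List Ω), REset C → ∃ x : ι, C = testOf x := by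
    rintro C ⟨e, hq⟩
    obtain ⟨ch, hch⟩ := repred_code hq
    refine ⟨(ch, e), ?_⟩
    ext p
    have h1 := hch (p.1, p.2.map e)
    simp only [List.map_map] at h1
    have h2 : (p.2.map (⇑e.symm ∘ ⇑e)) = p.2 := by
      simp
    rw [h2] at h1
    exact h1
  set lev : ι → ℕ := fun x => Encodable.encode x + 2 with hlev
  set S : ι → Set (List Ω) := fun x =>
    if MLTest P (testOf x) then {σ | (lev x, σ) ∈ testOf x} else ∅ with hS
  have hScyl : ∀ x : ι, cylMeasure P (S x) ≤ (2:ℝ)⁻¹ ^ (Encodable.encode x + 2) := by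
    intro x
    rw [hS]
    by_cases h : MLTest P (testOf x)
    · simp only [if_pos h]
      exact le_of_lt (h.2 (lev x) (Nat.succ_pos _))
    · simp only [if_neg h]
      rw [cylMeasure_empty]
      positivity
  have hcover : ∀ α : ℕ → Ω, ∃ x : ι, inOpen (S x) α := by
    intro α
    obtain ⟨C, hCtest, hCopen⟩ := hno' α
    obtain ⟨x, rfl⟩ := decode_test C hCtest.1
    refine ⟨x, ?_⟩
    have : S x = {σ | (lev x, σ) ∈ testOf x} := by rw [hS]; simp only [if_pos hCtest]
    rw [this]
    exact hCopen (lev x) (Nat.succ_pos _)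
  -- topology
  letI : TopologicalSpace Ω := ⊥
  haveI : DiscreteTopology Ω := ⟨rfl⟩
  set V : ι × List Ω → Set (ℕ → Ω) := fun y =>
    if y.2 ∈ S y.1 then {α : ℕ → Ω | seqPrefix α y.2.length = y.2} else ∅ with hV
  have hUopen : ∀ σ : List Ω, IsOpen {α : ℕ → Ω | seqPrefix α σ.length = σ} := by
    intro σ
    have heq : {α : ℕ → Ω | seqPrefix α σ.length = σ}
        = ⋂ i : Fin σ.length, {α : ℕ → Ω | α i = σ.get i} := by
      ext α
      simp only [Set.mem_setOf_eq, Set.mem_iInter]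
      constructor
      · intro h i
        have hi : (i : ℕ) < (seqPrefix α σ.length).length := by
          simpa [seqPrefix] using i.isLt
        calc α i = (seqPrefix α σ.length)[(i:ℕ)]'hi := by
              simp only [seqPrefix, List.getElem_ofFn]
          _ = σ[(i:ℕ)]'(i.isLt) := List.getElem_of_eq h hi
          _ = σ.get i := List.get_eq_getElem.symm
      · intro h
        apply List.ext_getElem (by simp [seqPrefix])
        intro i h1 h2
        simp only [seqPrefix, List.getElem_ofFn]
        exact h ⟨i, h2⟩
    rw [heq]
    apply isOpen_iInter_of_finite
    intro i
    show IsOpen ((fun α : ℕ → Ω => α (i : ℕ)) ⁻¹' {σ.get i})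
    exact (isOpen_discrete _).preimage (continuous_apply (i : ℕ))
  have hVopen : ∀ y, IsOpen (V y) := by
    intro y
    rw [hV]
    by_cases h : y.2 ∈ S y.1
    · simp only [if_pos h]
      exact hUopen y.2
    · simp only [if_neg h]
      exact isOpen_empty
  have hVcover : Set.univ ⊆ ⋃ y, V y := by
    intro α _
    obtain ⟨x, σ, hσ, hpre⟩ := hcover α
    apply Set.mem_iUnion.mpr
    refine ⟨(x, σ), ?_⟩
    rw [hV]
    simp only [if_pos hσ]
    exact hpre
  obtain ⟨t, ht⟩ := isCompact_univ.elim_finite_subcover V hVopen hVcover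
  set L : ℕ := t.sup (fun y => y.2.length) with hL
  have key : ∀ τ : Fin L → Ω, ∃ x ∈ t.image Prod.fst, ∃ σ ∈ S x, σ <+: List.ofFn τ := by
    intro τ
    set α : ℕ → Ω := fun i => if h : i < L then τ ⟨i, h⟩ else Classical.arbitrary Ω with hα
    have hmem : α ∈ ⋃ y ∈ t, V y := ht (Set.mem_univ α)
    obtain ⟨y, hyt, hyV⟩ := Set.mem_iUnion₂.mp hmem
    by_cases hσS : y.2 ∈ S y.1
    swap
    · rw [hV] at hyV; simp only [if_neg hσS] at hyV; exact absurd hyV (Set.notMem_empty α)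
    rw [hV] at hyV
    simp only [if_pos hσS, Set.mem_setOf_eq] at hyV
    have hlenL : y.2.length ≤ L := Finset.le_sup (f := fun y => y.2.length) hyt
    have h1 : List.ofFn τ = seqPrefix α L := by
      unfold seqPrefix
      congr 1
      funext i
      rw [hα]
      simp only [dif_pos i.isLt]
    have h2 : y.2 = (List.ofFn τ).take y.2.length := by
      rw [h1, seqPrefix_take α hlenL, hyV]
    refine ⟨y.1, Finset.mem_image_of_mem Prod.fst hyt, y.2, hσS, ?_⟩
    rw [h2]
    exact List.take_prefix _ _
  have h1 : levelSum P ({[]} : Set (List Ω)) L = 1 := by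
    unfold levelSum
    rw [Finset.sum_congr rfl (fun τ _ => if_pos ⟨[], rfl, List.nil_prefix⟩)]
    exact sum_weights_one hP.2 L
  have h2 : levelSum P ({[]} : Set (List Ω)) L ≤ ∑ x ∈ t.image Prod.fst, levelSum P (S x) L :=
    levelSum_le_sum hP.1 (fun τ _ => key τ)
  have h3 : ∑ x ∈ t.image Prod.fst, levelSum P (S x) L
      ≤ ∑ x ∈ t.image Prod.fst, (2:ℝ)⁻¹ ^ (Encodable.encode x + 2) :=
    Finset.sum_le_sum fun x _ => le_trans (levelSum_le_cylMeasure hP L) (hScyl x)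
  have h4 : ∑ x ∈ t.image Prod.fst, (2:ℝ)⁻¹ ^ (Encodable.encode x + 2)
      = ∑ j ∈ (t.image Prod.fst).image Encodable.encode, (2:ℝ)⁻¹ ^ (j + 2) := by
    rw [Finset.sum_image (fun x _ y _ h => Encodable.encode_injective h)]
  have h5 := geom_bound 0 ((t.image Prod.fst).image Encodable.encode) (fun j _ => Nat.zero_le j)
  have : (1:ℝ) ≤ (2:ℝ)⁻¹ ^ (0+1) := by
    rw [h1] at h2
    linarith [h2, h3, h4.le, h4.ge, h5]
  norm_num at this

-- ===== FINAL ASSEMBLY =====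
lemma evP_nonneg {Ω : Type*} [Fintype Ω] {P : Ω → ℝ} (hP : IsFPS P) (A : Set Ω) :
    0 ≤ evP P A := by
  apply Finset.sum_nonneg
  intro a _
  exact Set.indicator_nonneg (fun x _ => hP.1 x) a

lemma evP_le_one {Ω : Type*} [Fintype Ω] {P : Ω → ℝ} (hP : IsFPS P) (A : Set Ω) :
    evP P A ≤ 1 := by
  rw [← hP.2]
  apply Finset.sum_le_sum
  intro a _
  exact Set.indicator_le_self' (fun x _ => hP.1 x) a

/-- Events `A₁, …, Aₙ` are independent on `P` (every nonempty
subfamily multiplies) iff for every (iff for some) Martin-Löf `P`-random `α`, the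
characteristic ensembles `χ_{A₁}(α), …, χ_{Aₙ}(α)` are independent, i.e. their product
sequence is Martin-Löf random with respect to the product `P_{A₁} × ⋯ × P_{Aₙ}` of the
two-point spaces `P_{Aᵢ}(1) = P(Aᵢ)`, `P_{Aᵢ}(0) = 1 − P(Aᵢ)`. -/
theorem independence_of_events {Ω : Type*} [Fintype Ω] [Nonempty Ω] [DecidableEq Ω]
    {n : ℕ} (P : Ω → ℝ) (hP : IsFPS P) (A : Fin n → Finset Ω) :
    ((∀ s : Finset (Fin n), s.Nonempty →
        evP P {a : Ω | ∀ i ∈ s, a ∈ A i} = ∏ i ∈ s, evP P ((A i : Set Ω))) ↔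
      (∀ α : ℕ → Ω, MLRandom P α →
        MLRandom
          (fun x : Fin n → Bool =>
            ∏ i, if x i then evP P ((A i : Set Ω)) else 1 - evP P ((A i : Set Ω)))
          (fun k => fun i => decide (α k ∈ A i)))) ∧
    ((∀ s : Finset (Fin n), s.Nonempty →
        evP P {a : Ω | ∀ i ∈ s, a ∈ A i} = ∏ i ∈ s, evP P ((A i : Set Ω))) ↔
      (∃ α : ℕ → Ω, MLRandom P α ∧
        MLRandom
          (fun x : Fin n → Bool =>
            ∏ i, if x i then evP P ((A i : Set Ω)) else 1 - evP P ((A i : Set Ω)))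
          (fun k => fun i => decide (α k ∈ A i)))) := by
  classical
  set φ : Ω → (Fin n → Bool) := fun a => fun i => decide (a ∈ A i) with hφ
  set Q : (Fin n → Bool) → ℝ := fun x : Fin n → Bool =>
    ∏ i, if x i then evP P ((A i : Set Ω)) else 1 - evP P ((A i : Set Ω)) with hQ
  have hQfps : IsFPS Q := by
    constructor
    · intro b
      apply Finset.prod_nonneg
      intro i _
      split
      · exact evP_nonneg hP _
      · linarith [evP_le_one hP ((A i : Set Ω))]
    · show (∑ b : Fin n → Bool, ∏ i, if b i then evP P ((A i : Set Ω))
          else 1 - evP P ((A i : Set Ω))) = 1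
      rw [sum_pi_prod (fun i (v : Bool) => if v then evP P ((A i : Set Ω))
        else 1 - evP P ((A i : Set Ω)))]
      have : ∀ i : Fin n, (∑ v : Bool, if v then evP P ((A i : Set Ω))
          else 1 - evP P ((A i : Set Ω))) = 1 := by
        intro i
        simp
      rw [Finset.prod_congr rfl fun i _ => this i]
      simp
  have hItoF : (∀ s : Finset (Fin n), s.Nonempty →
        evP P {a : Ω | ∀ i ∈ s, a ∈ A i} = ∏ i ∈ s, evP P ((A i : Set Ω))) →
      (∀ α : ℕ → Ω, MLRandom P α → MLRandom Q (fun k => fun i => decide (α k ∈ A i))) := by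
    intro hI α hα
    have hpush : pushP P φ = Q := (indep_iff_push P A hP).mp hI
    have := MLRandom_push φ hα
    rw [hpush] at this
    exact this
  have hEtoI : (∃ α : ℕ → Ω, MLRandom P α ∧
        MLRandom Q (fun k => fun i => decide (α k ∈ A i))) →
      (∀ s : Finset (Fin n), s.Nonempty →
        evP P {a : Ω | ∀ i ∈ s, a ∈ A i} = ∏ i ∈ s, evP P ((A i : Set Ω))) := by
    rintro ⟨α, hα, hβQ⟩
    have hβP : MLRandom (pushP P φ) (φ ∘ α) := MLRandom_push φ hα
    have hQeq : Q = pushP P φ :=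
      random_unique hQfps (pushP_isFPS hP φ) hβQ hβP
    exact (indep_iff_push P A hP).mpr hQeq.symm
  constructor
  · constructor
    · exact hItoF
    · intro hF
      apply hEtoI
      obtain ⟨α, hα⟩ := exists_MLRandom P hP
      exact ⟨α, hα, hF α hα⟩
  · constructor
    · intro hI
      obtain ⟨α, hα⟩ := exists_MLRandom P hP
      exact ⟨α, hα, hItoF hI α hα⟩
    · exact hEtoI

end Paper
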